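/- Let G be a Fischer space of symplectic type (finite point set) and A its nilpotent Matsuo algebra over a field of characteristic 2. For each line ℓ, A decomposes into eigenspaces A = A₀^ℓ ⊕ A₁^ℓ of ad_{s_ℓ} with eigenvalues 0 and 1, and these decompositions satisfy the Z/2Z-graded fusion law: A₀^ℓ·A₀^ℓ ⊆ A₀^ℓ, A₀^ℓ·A₁^ℓ ⊆ A₁^ℓ, A₁^ℓ·A₁^ℓ ⊆ A₀^ℓ. -/

import Mathlib

/-- A partial triple system, given by a collinearity relation `col` and a map `third`
sending two distinct collinear points to the third point on their line. -/
structure IsPTS {P : Type*} (col : P → P → Prop) (third : P → P → P) : Prop where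
  symm : ∀ x y, col x y → col y x
  irrefl : ∀ x, ¬ col x x
  third_symm : ∀ x y, col x y → third x y = third y x
  col_third : ∀ x y, col x y → col x (third x y)
  third_ne_left : ∀ x y, col x y → third x y ≠ x
  third_ne_right : ∀ x y, col x y → third x y ≠ y
  third_third : ∀ x y, col x y → third x (third x y) = y
  unique_line : ∀ x y u v, col x y → col u v →
    x ∈ ({u, v, third u v} : Set P) → y ∈ ({u, v, third u v} : Set P) →
    ({x, y, third x y} : Set P) = {u, v, third u v}

/-- A subspace of a partial triple system: a set of points closed under taking
the third point of a line through two of its points. -/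
def IsSubspace {P : Type*} (col : P → P → Prop) (third : P → P → P) (S : Set P) : Prop :=
  ∀ x ∈ S, ∀ y ∈ S, col x y → third x y ∈ S

/-- The subspace generated by a set of points. -/
def fclosure {P : Type*} (col : P → P → Prop) (third : P → P → P) (T : Set P) : Set P :=
  ⋂₀ {S | T ⊆ S ∧ IsSubspace col third S}

/-- The line through two distinct collinear points, as a set. -/
def lineSet {P : Type*} (third : P → P → P) (x y : P) : Set P := {x, y, third x y}

/-- The six points of the complete quadrilateral (dual affine plane of order 2). -/
inductive CQPt | A | B | C | X | Y | Z
deriving DecidableEq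

/-- The "opposite point" involution of the complete quadrilateral. -/
def CQPt.opp : CQPt → CQPt
  | .A => .X | .X => .A | .B => .Y | .Y => .B | .C => .Z | .Z => .C

/-- Collinearity in the complete quadrilateral with lines
{A,B,C}, {A,Y,Z}, {B,X,Z}, {C,X,Y}: two points are collinear iff they are
distinct and not opposite. -/
def CQPt.col (p q : CQPt) : Prop := p ≠ q ∧ q ≠ p.opp

/-- The third point on the line through two distinct collinear points of the
complete quadrilateral. -/
def CQPt.third : CQPt → CQPt → CQPt
  | .A, .B => .C | .B, .A => .C | .A, .C => .B | .C, .A => .B | .B, .C => .A | .C, .B => .A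
  | .A, .Y => .Z | .Y, .A => .Z | .A, .Z => .Y | .Z, .A => .Y | .Y, .Z => .A | .Z, .Y => .A
  | .B, .X => .Z | .X, .B => .Z | .B, .Z => .X | .Z, .B => .X | .X, .Z => .B | .Z, .X => .B
  | .C, .X => .Y | .X, .C => .Y | .C, .Y => .X | .Y, .C => .X | .X, .Y => .C | .Y, .X => .C
  | p, _ => p

/-- A set of points is a complete quadrilateral if it is the isomorphic image of
the standard one (preserving collinearity and the `third` operation). -/
def IsCQSet {P : Type*} (col : P → P → Prop) (third : P → P → P) (S : Set P) : Prop :=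
  ∃ f : CQPt → P, Function.Injective f ∧ Set.range f = S ∧
    (∀ u v, col (f u) (f v) ↔ CQPt.col u v) ∧
    (∀ u v, CQPt.col u v → f (CQPt.third u v) = third (f u) (f v))

/-- A set of points is an affine plane of order 3 if it is the isomorphic image of
`AG(2,3)` (any two distinct points collinear, third point `-(u+v)`). -/
def IsAPSet {P : Type*} (col : P → P → Prop) (third : P → P → P) (S : Set P) : Prop :=
  ∃ f : ZMod 3 × ZMod 3 → P, Function.Injective f ∧ Set.range f = S ∧
    (∀ u v, col (f u) (f v) ↔ u ≠ v) ∧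
    (∀ u v, u ≠ v → f (-(u + v)) = third (f u) (f v))

/-- A Fischer space: a partial triple system in which the subspace generated by two
distinct intersecting lines is a complete quadrilateral or an affine plane of order 3. -/
structure IsFischer {P : Type*} (col : P → P → Prop) (third : P → P → P)
    extends IsPTS col third : Prop where
  dichotomy : ∀ x y u v, col x y → col u v →
    lineSet third x y ≠ lineSet third u v →
    (lineSet third x y ∩ lineSet third u v).Nonempty →
    IsCQSet col third (fclosure col third (lineSet third x y ∪ lineSet third u v)) ∨
    IsAPSet col third (fclosure col third (lineSet third x y ∪ lineSet third u v))

/-- A Fischer space of symplectic type: the subspace generated by two distinct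
intersecting lines is always a complete quadrilateral. -/
structure IsSymplectic {P : Type*} (col : P → P → Prop) (third : P → P → P)
    extends IsPTS col third : Prop where
  cq : ∀ x y u v, col x y → col u v →
    lineSet third x y ≠ lineSet third u v →
    (lineSet third x y ∩ lineSet third u v).Nonempty →
    IsCQSet col third (fclosure col third (lineSet third x y ∪ lineSet third u v))

/-- `A` is the nilpotent Matsuo algebra (char 2) of the geometry `(col, third)`,
with `e` the natural basis indexed by the points. -/
structure IsNilMatsuo (R : Type*) {A P : Type*} [CommRing R] [NonUnitalNonAssocCommRing A]
    [Module R A] (col : P → P → Prop) (third : P → P → P) (e : P → A) : Prop where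
  char2 : (2 : R) = 0
  mul_same : ∀ p, e p * e p = 0
  mul_of_not_col : ∀ p q, p ≠ q → ¬ col p q → e p * e q = 0
  mul_of_col : ∀ p q, p ≠ q → col p q → e p * e q = e p + e q + e (third p q)

instance : DecidableRel CQPt.col := fun p q => inferInstanceAs (Decidable (p ≠ q ∧ q ≠ p.opp))

section
variable {A : Type*} [NonUnitalNonAssocCommRing A]

lemma s2' (h2 : ∀ x : A, x + x = 0) : ∀ x : A, (2:ℤ) • x = 0 := fun x => by
  rw [two_smul]; exact h2 x
lemma sE' (h2 : ∀ x : A, x + x = 0) : ∀ (n:ℤ) (x : A), (n+2) • x = n • x := fun n x => by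
  rw [add_smul, s2' h2, add_zero]
lemma s3' (h2 : ∀ x : A, x + x = 0) : ∀ x : A, (3:ℤ) • x = x := fun x => by
  rw [show (3:ℤ) = 1+2 by norm_num, sE' h2, one_smul]
lemma s4' (h2 : ∀ x : A, x + x = 0) : ∀ x : A, (4:ℤ) • x = 0 := fun x => by
  rw [show (4:ℤ) = 2+2 by norm_num, sE' h2, s2' h2]
lemma s5' (h2 : ∀ x : A, x + x = 0) : ∀ x : A, (5:ℤ) • x = x := fun x => by
  rw [show (5:ℤ) = 3+2 by norm_num, sE' h2, s3' h2]
lemma s6' (h2 : ∀ x : A, x + x = 0) : ∀ x : A, (6:ℤ) • x = 0 := fun x => by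
  rw [show (6:ℤ) = 4+2 by norm_num, sE' h2, s4' h2]
lemma s7' (h2 : ∀ x : A, x + x = 0) : ∀ x : A, (7:ℤ) • x = x := fun x => by
  rw [show (7:ℤ) = 5+2 by norm_num, sE' h2, s5' h2]
lemma s8' (h2 : ∀ x : A, x + x = 0) : ∀ x : A, (8:ℤ) • x = 0 := fun x => by
  rw [show (8:ℤ) = 6+2 by norm_num, sE' h2, s6' h2]
lemma s9' (h2 : ∀ x : A, x + x = 0) : ∀ x : A, (9:ℤ) • x = x := fun x => by
  rw [show (9:ℤ) = 7+2 by norm_num, sE' h2, s7' h2]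
lemma s10' (h2 : ∀ x : A, x + x = 0) : ∀ x : A, (10:ℤ) • x = 0 := fun x => by
  rw [show (10:ℤ) = 8+2 by norm_num, sE' h2, s8' h2]
lemma s11' (h2 : ∀ x : A, x + x = 0) : ∀ x : A, (11:ℤ) • x = x := fun x => by
  rw [show (11:ℤ) = 9+2 by norm_num, sE' h2, s9' h2]
lemma s12' (h2 : ∀ x : A, x + x = 0) : ∀ x : A, (12:ℤ) • x = 0 := fun x => by
  rw [show (12:ℤ) = 10+2 by norm_num, sE' h2, s10' h2]

set_option maxHeartbeats 1000000 in
lemma cq_idem (E : CQPt → A) (h2 : ∀ x : A, x + x = 0)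
    (hmul : ∀ u v, E u * E v = if CQPt.col u v then E u + E v + E (CQPt.third u v) else 0)
    (a b d : CQPt) (hab : CQPt.col a b)
    (hd1 : d ≠ a) (hd2 : d ≠ b) (hd3 : d ≠ CQPt.third a b) :
    (E a + E b + E (CQPt.third a b)) * ((E a + E b + E (CQPt.third a b)) * E d)
      = (E a + E b + E (CQPt.third a b)) * E d := by
  have hc : ∀ u v, CQPt.col u v → E u * E v = E u + E v + E (CQPt.third u v) := fun u v h => by
    rw [hmul, if_pos h]
  have hn : ∀ u v, ¬ CQPt.col u v → E u * E v = 0 := fun u v h => by rw [hmul, if_neg h]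
  cases a <;> cases b <;> cases d <;>
    first
      | exact absurd hab (by decide)
      | exact absurd rfl hd1
      | exact absurd rfl hd2
      | exact absurd rfl hd3
      | (simp (config := { decide := true }) only [hc, hn, CQPt.third, mul_add, add_mul,
           mul_zero, zero_mul, add_zero, zero_add]
         abel_nf
         simp only [s2' h2, s3' h2, s4' h2, s5' h2, s6' h2, s7' h2, s8' h2, s9' h2, s10' h2,
           s11' h2, s12' h2, add_zero, zero_add]
         try abel)
end


instance : Fintype CQPt :=
  ⟨⟨{.A, .B, .C, .X, .Y, .Z}, by decide⟩, by intro x; cases x <;> decide⟩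

lemma CQPt.notcol_aux : ∀ u v w : CQPt, CQPt.col u v → w ≠ u → w ≠ v → w ≠ CQPt.third u v →
    ¬CQPt.col w u → ¬CQPt.col w v → ¬CQPt.col w (CQPt.third u v) := by decide

section
variable {A : Type*} [NonUnitalNonAssocCommRing A]

set_option maxHeartbeats 1000000 in
lemma cq_jac (E : CQPt → A) (h2 : ∀ x : A, x + x = 0)
    (hmul : ∀ u v, E u * E v = if CQPt.col u v then E u + E v + E (CQPt.third u v) else 0)
    (a b c : CQPt) (hab : CQPt.col a b) (hac : CQPt.col a c)
    (hc1 : c ≠ a) (hc2 : c ≠ b) (hc3 : c ≠ CQPt.third a b) :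
    E a * (E b * E c) + (E a * E b) * E c + E b * (E a * E c) = 0 := by
  have hc : ∀ u v, CQPt.col u v → E u * E v = E u + E v + E (CQPt.third u v) := fun u v h => by
    rw [hmul, if_pos h]
  have hn : ∀ u v, ¬ CQPt.col u v → E u * E v = 0 := fun u v h => by rw [hmul, if_neg h]
  cases a <;> cases b <;> cases c <;>
    first
      | exact absurd hab (by decide)
      | exact absurd hac (by decide)
      | exact absurd rfl hc1
      | exact absurd rfl hc2
      | exact absurd rfl hc3
      | (simp (config := { decide := true }) only [hc, hn, CQPt.third, mul_add, add_mul,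
           mul_zero, zero_mul, add_zero, zero_add]
         abel_nf
         simp only [s2' h2, s3' h2, s4' h2, s5' h2, s6' h2, s7' h2, s8' h2, s9' h2, s10' h2,
           s11' h2, s12' h2, add_zero, zero_add]
         try abel)
end


/-! ### geometry helpers -/

section Geom
variable {P : Type*} {col : P → P → Prop} {third : P → P → P}

lemma subset_fclosure' (T : Set P) : T ⊆ fclosure col third T :=
  fun _ hx => Set.mem_sInter.2 fun _ hS => hS.1 hx

lemma cq_embed (hS : IsSymplectic col third) {x y m z : P} (hxy : col x y) (hmz : col m z)
    (hm : m ∈ lineSet third x y) (hz : z ∉ lineSet third x y) :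
    ∃ f : CQPt → P, Function.Injective f ∧
      (∀ u v, col (f u) (f v) ↔ CQPt.col u v) ∧
      (∀ u v, CQPt.col u v → f (CQPt.third u v) = third (f u) (f v)) ∧
      ∃ a b d : CQPt, f a = x ∧ f b = y ∧ f d = z ∧ CQPt.col a b ∧
        d ≠ a ∧ d ≠ b ∧ d ≠ CQPt.third a b := by
  have hz2 : z ∈ lineSet third m z := Or.inr (Or.inl rfl)
  have hneL : lineSet third x y ≠ lineSet third m z := fun h => hz (h ▸ hz2)
  have hcap : (lineSet third x y ∩ lineSet third m z).Nonempty := ⟨m, hm, Or.inl rfl⟩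
  obtain ⟨f, finj, frange, fcol, fthird⟩ := hS.cq x y m z hxy hmz hneL hcap
  have hsub : lineSet third x y ∪ lineSet third m z ⊆ Set.range f := by
    rw [frange]; exact subset_fclosure' _
  obtain ⟨a, ha⟩ := hsub (Or.inl (Or.inl rfl))
  obtain ⟨b, hb⟩ := hsub (Or.inl (Or.inr (Or.inl rfl)))
  obtain ⟨d, hd⟩ := hsub (Or.inr (Or.inr (Or.inl rfl)))
  have hcab : CQPt.col a b := (fcol a b).1 (by rw [ha, hb]; exact hxy)
  have hthird : f (CQPt.third a b) = third x y := by rw [fthird a b hcab, ha, hb]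
  refine ⟨f, finj, fcol, fthird, a, b, d, ha, hb, hd, hcab, ?_, ?_, ?_⟩
  · intro h; apply hz; have : z = x := by rw [← hd, h, ha]
    rw [this]; exact Or.inl rfl
  · intro h; apply hz; have : z = y := by rw [← hd, h, hb]
    rw [this]; exact Or.inr (Or.inl rfl)
  · intro h; apply hz; have : z = third x y := by rw [← hd, h, hthird]
    rw [this]; exact Or.inr (Or.inr rfl)

lemma notcol_P (hS : IsSymplectic col third) {a b c : P} (hbc : col b c)
    (hnab : ¬ col a b) (hnac : ¬ col a c) (hne_ab : a ≠ b) (hne_ac : a ≠ c) :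
    a ≠ third b c ∧ ¬ col a (third b c) := by
  have hpts := hS.toIsPTS
  have hbd : col b (third b c) := hpts.col_third b c hbc
  have hdb : col (third b c) b := hpts.symm _ _ hbd
  have hne_ad : a ≠ third b c := by
    intro h; apply hnab; rw [h]; exact hdb
  refine ⟨hne_ad, ?_⟩
  intro had
  have hda : col (third b c) a := hpts.symm _ _ had
  have hz : a ∉ lineSet third b c := by
    intro h; rcases h with h | h | h
    · exact hne_ab h
    · exact hne_ac h
    · exact hne_ad h
  obtain ⟨f, finj, fcol, fthird, a', b', d', ha', hb', hd', hab', h1, h2, h3⟩ :=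
    cq_embed hS hbc hda (Or.inr (Or.inr rfl)) hz
  have t1 : ¬ CQPt.col d' a' := fun hcc => hnab (by rw [← ha', ← hd']; exact (fcol d' a').2 hcc)
  have t2 : ¬ CQPt.col d' b' := fun hcc => hnac (by rw [← hb', ← hd']; exact (fcol d' b').2 hcc)
  have t3 : CQPt.col d' (CQPt.third a' b') := by
    apply (fcol _ _).1
    rw [hd', fthird a' b' hab', ha', hb']
    exact had
  exact CQPt.notcol_aux a' b' d' hab' h1 h2 h3 t1 t2 t3

end Geom

/-! ### algebra helpers -/

section Alg
variable {k A P : Type*} [CommRing k] [NonUnitalNonAssocCommRing A] [Module k A]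
variable {col : P → P → Prop} {third : P → P → P} {e : P → A}

lemma h2A (hM : IsNilMatsuo k col third e) : ∀ x : A, x + x = 0 := fun x => by
  rw [← two_smul k x, hM.char2, zero_smul]

lemma mulE_of (hM : IsNilMatsuo k col third e)
    {f : CQPt → P} (finj : Function.Injective f)
    (fcol : ∀ u v, col (f u) (f v) ↔ CQPt.col u v)
    (fthird : ∀ u v, CQPt.col u v → f (CQPt.third u v) = third (f u) (f v)) :
    ∀ u v, e (f u) * e (f v) =
      if CQPt.col u v then e (f u) + e (f v) + e (f (CQPt.third u v)) else 0 := by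
  intro u v
  by_cases h : CQPt.col u v
  · rw [if_pos h]
    have hne : u ≠ v := h.1
    rw [hM.mul_of_col _ _ (fun he => hne (finj he)) ((fcol u v).2 h), fthird u v h]
  · rw [if_neg h]
    by_cases huv : u = v
    · subst huv; exact hM.mul_same _
    · exact hM.mul_of_not_col _ _ (fun he => huv (finj he)) (fun hc => h ((fcol u v).1 hc))

/-- facts about a line `{p, q, third p q}` -/
lemma jswap (x y z : A) :
    x * (y * z) + (x * y) * z + y * (x * z) = y * (x * z) + (y * x) * z + x * (y * z) := by
  rw [mul_comm y x]; abel

lemma jrot (x y z : A) :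
    x * (y * z) + (x * y) * z + y * (x * z) = z * (x * y) + (z * x) * y + x * (z * y) := by
  rw [mul_comm z (x * y), mul_comm z x, mul_comm z y, mul_comm (x * z) y]; abel

lemma jac_center (hS : IsSymplectic col third) (hM : IsNilMatsuo k col third e)
    {a b c : P} (hab : col a b) (hac : col a c) (hcb : c ≠ b) :
    e a * (e b * e c) + (e a * e b) * e c + e b * (e a * e c) = 0 := by
  have hpts := hS.toIsPTS
  have h2 := h2A hM
  have hne_ab : a ≠ b := fun h => hpts.irrefl b (h ▸ hab)
  have hne_ac : a ≠ c := fun h => hpts.irrefl c (h ▸ hac)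
  by_cases hct : c = third a b
  · subst hct
    have har : col a (third a b) := hpts.col_third a b hab
    have hbr : col b (third a b) := by
      have h' := hpts.col_third b a (hpts.symm _ _ hab)
      rwa [← hpts.third_symm a b hab] at h'
    have hne_br : b ≠ third a b := fun h => (hpts.third_ne_right a b hab) h.symm
    have t_ar : third a (third a b) = b := hpts.third_third a b hab
    have t_br : third b (third a b) = a := by
      have h' := hpts.third_third b a (hpts.symm _ _ hab)
      rwa [← hpts.third_symm a b hab] at h'
    have m_ab : e a * e b = e a + e b + e (third a b) := hM.mul_of_col _ _ hne_ab hab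
    have m_ar : e a * e (third a b) = e a + e (third a b) + e b := by
      rw [hM.mul_of_col _ _ hne_ac har, t_ar]
    have m_br : e b * e (third a b) = e b + e (third a b) + e a := by
      rw [hM.mul_of_col _ _ hne_br hbr, t_br]
    have m_ba : e b * e a = e a + e b + e (third a b) := (mul_comm (e b) (e a)).trans m_ab
    simp only [m_br, m_ab, m_ar, m_ba, hM.mul_same, mul_add, add_mul,
      mul_zero, zero_mul, add_zero, zero_add]
    abel_nf
    simp only [s2' h2, s3' h2, s4' h2, s5' h2, s6' h2, s7' h2, s8' h2, s9' h2, s10' h2,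
      s11' h2, s12' h2, add_zero, zero_add]
    try abel
  · have hz : c ∉ lineSet third a b := by
      intro h; rcases h with h | h | h
      · exact hne_ac h.symm
      · exact hcb h
      · exact hct h
    obtain ⟨f, finj, fcol, fthird, a', b', d', ha', hb', hd', hab', h1, h2', h3⟩ :=
      cq_embed hS hab hac (Or.inl rfl) hz
    have hmul := mulE_of hM finj fcol fthird
    have hcad : CQPt.col a' d' := (fcol a' d').1 (by rw [ha', hd']; exact hac)
    have := cq_jac (fun u => e (f u)) h2 hmul a' b' d' hab' hcad h1 h2' h3
    simp only [ha', hb', hd'] at this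
    exact this

lemma jac_isolated (hS : IsSymplectic col third) (hM : IsNilMatsuo k col third e)
    {a b c : P} (hnab : ¬ col a b) (hnac : ¬ col a c) (hne_ab : a ≠ b) (hne_ac : a ≠ c) :
    e a * (e b * e c) + (e a * e b) * e c + e b * (e a * e c) = 0 := by
  have hpts := hS.toIsPTS
  have m_ab : e a * e b = 0 := hM.mul_of_not_col _ _ hne_ab hnab
  have m_ac : e a * e c = 0 := hM.mul_of_not_col _ _ hne_ac hnac
  rw [m_ab, m_ac, zero_mul, mul_zero, add_zero, add_zero]
  by_cases hbc_eq : b = c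
  · subst hbc_eq; rw [hM.mul_same, mul_zero]
  by_cases hbc : col b c
  · rw [hM.mul_of_col _ _ hbc_eq hbc]
    obtain ⟨hne_ad, hnad⟩ := notcol_P hS hbc hnab hnac hne_ab hne_ac
    simp only [mul_add, m_ab, m_ac, hM.mul_of_not_col _ _ hne_ad hnad, add_zero, zero_add]
  · rw [hM.mul_of_not_col _ _ hbc_eq hbc, mul_zero]

lemma jacP (hS : IsSymplectic col third) (hM : IsNilMatsuo k col third e) (a b c : P) :
    e a * (e b * e c) + (e a * e b) * e c + e b * (e a * e c) = 0 := by
  have hpts := hS.toIsPTS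
  have h2 := h2A hM
  by_cases hab_eq : a = b
  · subst hab_eq
    simp only [hM.mul_same, zero_mul, add_zero, zero_add]
    exact h2 _
  by_cases hac_eq : a = c
  · subst hac_eq
    rw [mul_comm (e b) (e a), mul_comm (e a * e b) (e a), hM.mul_same, mul_zero, add_zero]
    exact h2 _
  by_cases hbc_eq : b = c
  · subst hbc_eq
    rw [hM.mul_same, mul_zero, zero_add, mul_comm (e a * e b) (e b)]
    exact h2 _
  by_cases hab : col a b <;> by_cases hac : col a c
  · exact jac_center hS hM hab hac (Ne.symm hbc_eq)
  · by_cases hbc : col b c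
    · rw [jswap]; exact jac_center hS hM (hpts.symm _ _ hab) hbc (Ne.symm hac_eq)
    · rw [jrot]
      exact jac_isolated hS hM (fun h => hac (hpts.symm _ _ h))
        (fun h => hbc (hpts.symm _ _ h)) (Ne.symm hac_eq) (Ne.symm hbc_eq)
  · by_cases hbc : col b c
    · rw [jrot]
      exact jac_center hS hM (hpts.symm _ _ hac) (hpts.symm _ _ hbc) (Ne.symm hab_eq)
    · rw [jswap]
      exact jac_isolated hS hM (fun h => hab (hpts.symm _ _ h)) hbc (Ne.symm hab_eq) hbc_eq
  · exact jac_isolated hS hM hab hac hab_eq hac_eq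

/-- `s_ℓ · e w = 0` for `w` on the line. -/
lemma s_line_zero (hS : IsSymplectic col third) (hM : IsNilMatsuo k col third e)
    {p q : P} (hpq : col p q) (w : P) (hw : w = p ∨ w = q ∨ w = third p q) :
    (e p + e q + e (third p q)) * e w = 0 := by
  have hpts := hS.toIsPTS
  have h2 := h2A hM
  have hqp : col q p := hpts.symm _ _ hpq
  have hne_pq : p ≠ q := fun h => hpts.irrefl q (h ▸ hpq)
  have hpr : col p (third p q) := hpts.col_third p q hpq
  have hqr : col q (third p q) := by
    have h' := hpts.col_third q p hqp
    rwa [← hpts.third_symm p q hpq] at h'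
  have hrp : col (third p q) p := hpts.symm _ _ hpr
  have hrq : col (third p q) q := hpts.symm _ _ hqr
  have hne_rp : third p q ≠ p := hpts.third_ne_left p q hpq
  have hne_rq : third p q ≠ q := hpts.third_ne_right p q hpq
  have t_qp : third q p = third p q := (hpts.third_symm p q hpq).symm
  have t_pr : third p (third p q) = q := hpts.third_third p q hpq
  have t_qr : third q (third p q) = p := by
    have h' := hpts.third_third q p hqp
    rwa [t_qp] at h'
  have t_rp : third (third p q) p = q := by rw [hpts.third_symm _ _ hrp]; exact t_pr
  have t_rq : third (third p q) q = p := by rw [hpts.third_symm _ _ hrq]; exact t_qr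
  have m_qp : e q * e p = e q + e p + e (third p q) := by
    rw [hM.mul_of_col _ _ (Ne.symm hne_pq) hqp, t_qp]
  have m_rp : e (third p q) * e p = e (third p q) + e p + e q := by
    rw [hM.mul_of_col _ _ hne_rp hrp, t_rp]
  have m_pq : e p * e q = e p + e q + e (third p q) := hM.mul_of_col _ _ hne_pq hpq
  have m_rq : e (third p q) * e q = e (third p q) + e q + e p := by
    rw [hM.mul_of_col _ _ hne_rq hrq, t_rq]
  have m_pr : e p * e (third p q) = e p + e (third p q) + e q := by
    rw [hM.mul_of_col _ _ (Ne.symm hne_rp) hpr, t_pr]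
  have m_qr : e q * e (third p q) = e q + e (third p q) + e p := by
    rw [hM.mul_of_col _ _ (Ne.symm hne_rq) hqr, t_qr]
  rcases hw with rfl | rfl | rfl <;>
    · simp only [add_mul, m_qp, m_rp, m_pq, m_rq, m_pr, m_qr, hM.mul_same,
        add_zero, zero_add]
      abel_nf
      simp only [s2' h2, s3' h2, s4' h2, add_zero, zero_add]
      try abel

/-- idempotency of `ad s` on basis vectors -/
lemma s_idem_basis (hS : IsSymplectic col third) (hM : IsNilMatsuo k col third e)
    {p q : P} (hpq : col p q) (w : P) :
    (e p + e q + e (third p q)) * ((e p + e q + e (third p q)) * e w)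
      = (e p + e q + e (third p q)) * e w := by
  have hpts := hS.toIsPTS
  have h2 := h2A hM
  by_cases hw : w = p ∨ w = q ∨ w = third p q
  · rw [s_line_zero hS hM hpq w hw, mul_zero]
  push_neg at hw
  obtain ⟨hwp, hwq, hwr⟩ := hw
  by_cases hcol : col p w ∨ col q w ∨ col (third p q) w
  · -- CQ case
    have hz : w ∉ lineSet third p q := by
      intro h; rcases h with h | h | h
      · exact hwp h
      · exact hwq h
      · exact hwr h
    have hm : ∃ m, (m = p ∨ m = q ∨ m = third p q) ∧ col m w := by
      rcases hcol with h | h | h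
      · exact ⟨p, Or.inl rfl, h⟩
      · exact ⟨q, Or.inr (Or.inl rfl), h⟩
      · exact ⟨third p q, Or.inr (Or.inr rfl), h⟩
    obtain ⟨m, hmem, hmw⟩ := hm
    have hmem' : m ∈ lineSet third p q := by
      rcases hmem with rfl | rfl | rfl
      · exact Or.inl rfl
      · exact Or.inr (Or.inl rfl)
      · exact Or.inr (Or.inr rfl)
    obtain ⟨f, finj, fcol, fthird, a', b', d', ha', hb', hd', hab', h1, h2', h3⟩ :=
      cq_embed hS hpq hmw hmem' hz
    have hmul := mulE_of hM finj fcol fthird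
    have hr' : f (CQPt.third a' b') = third p q := by rw [fthird a' b' hab', ha', hb']
    have := cq_idem (fun u => e (f u)) h2 hmul a' b' d' hab' h1 h2' h3
    simp only [ha', hb', hd', hr'] at this
    exact this
  · push_neg at hcol
    obtain ⟨h1, h2', h3⟩ := hcol
    have hzero : (e p + e q + e (third p q)) * e w = 0 := by
      simp only [add_mul, hM.mul_of_not_col _ _ (Ne.symm hwp) h1,
        hM.mul_of_not_col _ _ (Ne.symm hwq) h2',
        hM.mul_of_not_col _ _ (Ne.symm hwr) h3, add_zero]
    rw [hzero, mul_zero]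

end Alg



set_option maxHeartbeats 1000000 in
/-- Let `A` be the nilpotent Matsuo algebra of a Fischer space of symplectic type
(finite point set) over a field of characteristic 2. For each line ℓ (through the
collinear points `p, q`), `A` is the direct sum of the eigenspaces of `ad_{s_ℓ}` for
the eigenvalues 0 and 1, and this decomposition satisfies the `ℤ/2ℤ`-graded fusion
law: `A₀·A₀ ⊆ A₀`, `A₀·A₁ ⊆ A₁`, `A₁·A₁ ⊆ A₀`. -/
theorem stmt17 {k A P : Type*} [Field k] [NonUnitalNonAssocCommRing A]
    [Module k A] [SMulCommClass k A A] [IsScalarTower k A A] [Fintype P]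
    (col : P → P → Prop) (third : P → P → P)
    (hS : IsSymplectic col third)
    (e : Module.Basis P k A) (hM : IsNilMatsuo k col third ⇑e)
    (p q : P) (hpq : col p q)
    (A0 A1 : Submodule k A)
    (hA0 : A0 = Module.End.eigenspace
      (LinearMap.mulLeft k (e p + e q + e (third p q))) 0)
    (hA1 : A1 = Module.End.eigenspace
      (LinearMap.mulLeft k (e p + e q + e (third p q))) 1) :
    IsCompl A0 A1 ∧
      (∀ u ∈ A0, ∀ v ∈ A0, u * v ∈ A0) ∧
      (∀ u ∈ A0, ∀ v ∈ A1, u * v ∈ A1) ∧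
      (∀ u ∈ A1, ∀ v ∈ A1, u * v ∈ A0) := by
  have h2 := h2A hM
  have hneg : ∀ x : A, -x = x := fun x => neg_eq_of_add_eq_zero_left (h2 x)
  -- derivation property
  have hterm : ∀ m i j : P, e m * (e i * e j) = (e m * e i) * e j + e i * (e m * e j) := by
    intro m i j
    have h := jacP hS hM m i j
    have h' : e m * (e i * e j) = -((e m * e i) * e j + e i * (e m * e j)) := by
      apply eq_neg_of_add_eq_zero_left
      rw [← add_assoc]; exact h
    rw [h', hneg]
  have hder : ∀ x y : A,
      (e p + e q + e (third p q)) * (x * y)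
        = ((e p + e q + e (third p q)) * x) * y + x * ((e p + e q + e (third p q)) * y) := by
    have key : (LinearMap.mul k A).compr₂ (LinearMap.mulLeft k (e p + e q + e (third p q)))
        = (LinearMap.mul k A).comp (LinearMap.mulLeft k (e p + e q + e (third p q)))
          + (LinearMap.mul k A).compl₂ (LinearMap.mulLeft k (e p + e q + e (third p q))) := by
      apply e.ext; intro i
      apply e.ext; intro j
      simp only [LinearMap.compr₂_apply, LinearMap.mul_apply', LinearMap.comp_apply,
        LinearMap.add_apply, LinearMap.compl₂_apply, LinearMap.mulLeft_apply]
      simp only [add_mul, mul_add]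
      rw [hterm p i j, hterm q i j, hterm (third p q) i j]
      abel
    intro x y
    have := LinearMap.congr_fun (LinearMap.congr_fun key x) y
    simpa only [LinearMap.compr₂_apply, LinearMap.mul_apply', LinearMap.comp_apply,
      LinearMap.add_apply, LinearMap.compl₂_apply, LinearMap.mulLeft_apply] using this
  -- idempotency
  have hL2 : ∀ x : A,
      (e p + e q + e (third p q)) * ((e p + e q + e (third p q)) * x)
        = (e p + e q + e (third p q)) * x := by
    have key : (LinearMap.mulLeft k (e p + e q + e (third p q))).comp
        (LinearMap.mulLeft k (e p + e q + e (third p q)))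
        = LinearMap.mulLeft k (e p + e q + e (third p q)) := by
      apply e.ext; intro i
      simp only [LinearMap.comp_apply, LinearMap.mulLeft_apply]
      exact s_idem_basis hS hM hpq i
    intro x
    have := LinearMap.congr_fun key x
    simpa only [LinearMap.comp_apply, LinearMap.mulLeft_apply] using this
  have mem0 : ∀ x : A, x ∈ A0 ↔ (e p + e q + e (third p q)) * x = 0 := by
    intro x
    rw [hA0, Module.End.mem_eigenspace_iff, zero_smul, LinearMap.mulLeft_apply]
  have mem1 : ∀ x : A, x ∈ A1 ↔ (e p + e q + e (third p q)) * x = x := by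
    intro x
    rw [hA1, Module.End.mem_eigenspace_iff, one_smul, LinearMap.mulLeft_apply]
  refine ⟨⟨?_, ?_⟩, ?_, ?_, ?_⟩
  · rw [Submodule.disjoint_def]
    intro x hx0 hx1
    rw [mem0] at hx0
    rw [mem1] at hx1
    rw [← hx1, hx0]
  · rw [codisjoint_iff, eq_top_iff]
    intro x _
    apply Submodule.mem_sup.2
    refine ⟨x - (e p + e q + e (third p q)) * x, ?_, (e p + e q + e (third p q)) * x, ?_, ?_⟩
    · rw [mem0, mul_sub, hL2, sub_self]
    · rw [mem1]; exact hL2 x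
    · exact sub_add_cancel x _
  · intro u hu v hv
    rw [mem0] at hu hv ⊢
    rw [hder u v, hu, hv, zero_mul, mul_zero, add_zero]
  · intro u hu v hv
    rw [mem0] at hu
    rw [mem1] at hv ⊢
    rw [hder u v, hu, hv, zero_mul, zero_add]
  · intro u hu v hv
    rw [mem1] at hu hv
    rw [mem0]
    rw [hder u v, hu, hv]
    exact h2 _
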